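/- Given L ≥ 1, real parameters J_u > 0, η > 0, A > 0, 0 < α < 1, ordered nodes 0 < θ_1 < θ_2 < … < θ_L and positive weights μ_1, …, μ_L > 0, set γ_ℓ = (2 sin(πα)/(π J_u)) θ_ℓ^{1−2α} and Υ_ℓ = A Γ(1+α) γ_ℓ, and let S be the (L+2)×(L+2) real matrix whose row 0 and column 0 are zero and whose remaining entries are S(1,1) = −1/(J_u η), S(1,1+ℓ) = −A Γ(1+α) μ_ℓ / J_u, S(1+ℓ,1) = −γ_ℓ/η, and S(1+ℓ,1+j) = −Υ_ℓ μ_j − θ_ℓ² δ_{ℓj}. Then 0 is an eigenvalue of S of algebraic multiplicity exactly 1, and there exist L+1 real numbers λ_1, …, λ_{L+1}, each an eigenvalue of S, satisfying λ_{L+1} < −θ_L², −θ_ℓ² < λ_ℓ < −θ_{ℓ−1}² for ℓ = 2, …, L, and −θ_1² < λ_1 < 0. In particular all L+2 eigenvalues of S are real, simple, and the nonzero ones are strictly negative. -/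

import Mathlib

open Finset Matrix Polynomial

noncomputable def pfun {n : ℕ} (d w : Fin n → ℝ) (x : ℝ) : ℝ :=
  (∏ k, (x + d k)) + ∑ i, w i * ∏ k ∈ Finset.univ.erase i, (x + d k)

lemma pfun_cont {n : ℕ} (d w : Fin n → ℝ) : Continuous (pfun d w) := by
  unfold pfun
  apply Continuous.add
  · exact continuous_finset_prod _ fun k _ => by fun_prop
  · exact continuous_finset_sum _ fun i _ =>
      (continuous_const.mul (continuous_finset_prod _ fun k _ => by fun_prop))

lemma pfun_eval {n : ℕ} (d w : Fin n → ℝ) (i : Fin n) :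
    pfun d w (-(d i)) = w i * ∏ k ∈ Finset.univ.erase i, (d k - d i) := by
  unfold pfun
  rw [Finset.prod_eq_zero (Finset.mem_univ i) (by ring), zero_add]
  rw [Finset.sum_eq_single i]
  · congr 1; apply Finset.prod_congr rfl; intro k _; ring
  · intro j _ hj
    rw [Finset.prod_eq_zero (Finset.mem_erase.mpr ⟨Ne.symm hj, Finset.mem_univ i⟩) (by ring),
      mul_zero]
  · intro h; exact absurd (Finset.mem_univ i) h

lemma exists_root_Ioo {f : ℝ → ℝ} (hf : Continuous f) {a b : ℝ} (hab : a < b)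
    (h : f a * f b < 0) : ∃ c ∈ Set.Ioo a b, f c = 0 := by
  rcases mul_neg_iff.mp h with ⟨ha, hb⟩ | ⟨ha, hb⟩
  · have : (0:ℝ) ∈ Set.Ioo (f b) (f a) := ⟨hb, ha⟩
    obtain ⟨c, hc, hc0⟩ := intermediate_value_Ioo' hab.le hf.continuousOn this
    exact ⟨c, hc, hc0⟩
  · have : (0:ℝ) ∈ Set.Ioo (f a) (f b) := ⟨ha, hb⟩
    obtain ⟨c, hc, hc0⟩ := intermediate_value_Ioo hab.le hf.continuousOn this
    exact ⟨c, hc, hc0⟩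

lemma erase_eq_Iio_union_Ioi {n : ℕ} (i : Fin n) :
    Finset.univ.erase i = Finset.Iio i ∪ Finset.Ioi i := by
  ext k
  simp only [Finset.mem_erase, Finset.mem_univ, and_true, Finset.mem_union, Finset.mem_Iio,
    Finset.mem_Ioi]
  exact ⟨fun h => lt_or_gt_of_ne h, fun h => h.elim ne_of_lt ne_of_gt⟩

lemma prod_neg' {α : Type*} (s : Finset α) (f : α → ℝ) :
    ∏ k ∈ s, (-(f k)) = (-1) ^ s.card * ∏ k ∈ s, f k := by
  rw [← Finset.prod_const, ← Finset.prod_mul_distrib]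
  apply Finset.prod_congr rfl; intro k _; ring

lemma sign_prod_sub {n : ℕ} (d : Fin n → ℝ) (hd : StrictMono d) (i : Fin n) :
    0 < (-1 : ℝ) ^ (i : ℕ) * ∏ k ∈ Finset.univ.erase i, (d k - d i) := by
  rw [erase_eq_Iio_union_Ioi, Finset.prod_union (by
    rw [Finset.disjoint_left]
    intro a ha hb
    exact absurd ((Finset.mem_Iio.mp ha).trans (Finset.mem_Ioi.mp hb)) (lt_irrefl _))]
  have h1 : ∏ k ∈ Finset.Iio i, (d k - d i) = (-1) ^ (i:ℕ) * ∏ k ∈ Finset.Iio i, (d i - d k) := by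
    rw [← Fin.card_Iio i, ← prod_neg']
    apply Finset.prod_congr rfl; intro k _; ring
  rw [h1]
  have h2 : 0 < ∏ k ∈ Finset.Iio i, (d i - d k) :=
    Finset.prod_pos fun k hk => sub_pos.mpr (hd (Finset.mem_Iio.mp hk))
  have h3 : 0 < ∏ k ∈ Finset.Ioi i, (d k - d i) :=
    Finset.prod_pos fun k hk => sub_pos.mpr (hd (Finset.mem_Ioi.mp hk))
  have h4 : ((-1 : ℝ) ^ (i:ℕ)) * ((-1) ^ (i:ℕ)) = 1 := by
    rw [← pow_add]; exact Even.neg_one_pow ⟨(i:ℕ), rfl⟩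
  calc (0:ℝ) < (((-1:ℝ)^(i:ℕ)) * ((-1) ^ (i:ℕ))) * ((∏ k ∈ Finset.Iio i, (d i - d k)) *
        ∏ k ∈ Finset.Ioi i, (d k - d i)) := by rw [h4]; nlinarith
    _ = (-1) ^ (i:ℕ) * (((-1) ^ (i:ℕ) * ∏ k ∈ Finset.Iio i, (d i - d k)) *
        ∏ x ∈ Finset.Ioi i, (d x - d i)) := by ring

lemma aux_det {n : ℕ} (e u v : Fin n → ℝ) (he : ∀ i, e i ≠ 0) :
    (Matrix.of fun i j => (if i = j then e i else 0) + u i * v j).det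
      = (∏ i, e i) + ∑ i, u i * v i * ∏ k ∈ Finset.univ.erase i, e k := by
  have key : (Matrix.of fun i j => (if i = j then e i else 0) + u i * v j)
      = Matrix.diagonal e *
        (1 + Matrix.replicateCol (Fin 1) (fun i => u i / e i) * Matrix.replicateRow (Fin 1) v) := by
    ext i j
    rw [Matrix.diagonal_mul]
    simp only [Matrix.of_apply, Matrix.add_apply, Matrix.one_apply, Matrix.mul_apply,
      Matrix.replicateCol_apply, Matrix.replicateRow_apply, Finset.univ_unique, Finset.sum_singleton]
    by_cases h : i = j
    · subst h
      rw [if_pos rfl, if_pos rfl, mul_add, mul_one]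
      congr 1
      rw [← mul_assoc, mul_comm (e i) (u i / e i), div_mul_cancel₀ _ (he i)]
    · rw [if_neg h, if_neg h, zero_add, mul_add, mul_zero, zero_add, ← mul_assoc,
        mul_comm (e i) (u i / e i), div_mul_cancel₀ _ (he i)]
  rw [key, Matrix.det_mul, Matrix.det_diagonal]; erw [Matrix.det_one_add_replicateCol_mul_replicateRow (ι := Fin 1) (fun i => u i / e i) v]
  rw [dotProduct, mul_add, mul_one, Finset.mul_sum]
  congr 1
  apply Finset.sum_congr rfl
  intro i _
  rw [← Finset.mul_prod_erase Finset.univ e (Finset.mem_univ i)]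
  field_simp [he i]

lemma far_sign {n : ℕ} (d w : Fin (n+1) → ℝ) (hd : StrictMono d) (hw : ∀ i, 0 < w i) :
    0 < (-1 : ℝ) ^ (n+1) * pfun d w (-(d (Fin.last n) + (1 + ∑ i, w i))) := by
  set B : ℝ := 1 + ∑ i, w i with hBdef
  have hsum : 0 < ∑ i, w i := Finset.sum_pos (fun i _ => hw i) Finset.univ_nonempty
  have hB : 1 ≤ B := by simp [hBdef]; linarith
  set c : Fin (n+1) → ℝ := fun k => d (Fin.last n) + B - d k with hcdef
  have hcB : ∀ k, B ≤ c k := by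
    intro k
    have := hd.monotone (Fin.le_last k)
    simp only [hcdef]; linarith
  have hc : ∀ k, 0 < c k := fun k => lt_of_lt_of_le (by linarith) (hcB k)
  have hx : ∀ k : Fin (n+1), (-(d (Fin.last n) + B)) + d k = -(c k) := by
    intro k; simp only [hcdef]; ring
  have hcard : (Finset.univ : Finset (Fin (n+1))).card = n + 1 := by
    rw [Finset.card_univ, Fintype.card_fin]
  have hcarde : ∀ i : Fin (n+1), ((Finset.univ : Finset (Fin (n+1))).erase i).card = n := by
    intro i; rw [Finset.card_erase_of_mem (Finset.mem_univ i), hcard]; omega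
  have e1 : pfun d w (-(d (Fin.last n) + B))
      = (-1)^(n+1) * ∏ k, c k + ∑ i, w i * ((-1)^n * ∏ k ∈ Finset.univ.erase i, c k) := by
    unfold pfun
    congr 1
    · rw [Finset.prod_congr rfl (fun k _ => hx k), prod_neg', hcard]
    · apply Finset.sum_congr rfl
      intro i _
      rw [Finset.prod_congr rfl (fun k _ => hx k), prod_neg', hcarde i]
  have hp1 : ((-1:ℝ)^(n+1)) * ((-1:ℝ)^(n+1)) = 1 := by
    rw [← pow_add]; exact Even.neg_one_pow ⟨n+1, by ring⟩
  have hp2 : ((-1:ℝ)^(n+1)) * ((-1:ℝ)^n) = -1 := by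
    rw [← pow_add]; exact Odd.neg_one_pow ⟨n, by ring⟩
  have e2 : (-1:ℝ)^(n+1) * pfun d w (-(d (Fin.last n) + B))
      = ∏ k, c k - ∑ i, w i * ∏ k ∈ Finset.univ.erase i, c k := by
    rw [e1, mul_add]
    congr 1
    · rw [← mul_assoc, hp1, one_mul]
    · rw [Finset.mul_sum, ← Finset.sum_neg_distrib]
      apply Finset.sum_congr rfl
      intro i _
      calc (-1:ℝ)^(n+1) * (w i * ((-1)^n * ∏ k ∈ Finset.univ.erase i, c k))
          = ((-1:ℝ)^(n+1) * (-1)^n) * (w i * ∏ k ∈ Finset.univ.erase i, c k) := by ring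
        _ = -(w i * ∏ k ∈ Finset.univ.erase i, c k) := by rw [hp2]; ring
  rw [e2, sub_pos]
  have hQ : ∀ i, 0 < ∏ k ∈ Finset.univ.erase i, c k :=
    fun i => Finset.prod_pos fun k _ => hc k
  have hP : 0 < ∏ k, c k := Finset.prod_pos fun k _ => hc k
  have hstep : (∑ i, w i * ∏ k ∈ Finset.univ.erase i, c k) * B ≤ (∑ i, w i) * ∏ k, c k := by
    rw [Finset.sum_mul, Finset.sum_mul]
    apply Finset.sum_le_sum
    intro i _
    calc w i * (∏ k ∈ Finset.univ.erase i, c k) * B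
        ≤ w i * (∏ k ∈ Finset.univ.erase i, c k) * c i := by
          apply mul_le_mul_of_nonneg_left (hcB i)
          exact le_of_lt (mul_pos (hw i) (hQ i))
      _ = w i * ∏ k, c k := by
          rw [mul_assoc, Finset.prod_erase_mul _ _ (Finset.mem_univ i)]
  have hlt : (∑ i, w i) * ∏ k, c k < B * ∏ k, c k := by
    apply mul_lt_mul_of_pos_right _ hP
    simp [hBdef]
  have hBpos : (0:ℝ) < B := by linarith
  have := lt_of_le_of_lt hstep hlt
  nlinarith [this, hBpos]

lemma core {n : ℕ} (d w : Fin (n+1) → ℝ) (hd : StrictMono d) (hw : ∀ i, 0 < w i) :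
    ∃ lam : Fin (n+1) → ℝ,
      (∀ i, pfun d w (lam i) = 0) ∧
      (∀ i k, lam i + d k ≠ 0) ∧
      (∀ i, lam i < -d i) ∧
      (∀ i : Fin (n+1), ∀ h : (i:ℕ) < n, -d ⟨(i:ℕ)+1, by omega⟩ < lam i) ∧
      (∀ i j : Fin (n+1), i < j → lam j < lam i) := by
  set B : ℝ := 1 + ∑ i, w i with hBdef
  have hsum : 0 < ∑ i, w i := Finset.sum_pos (fun i _ => hw i) Finset.univ_nonempty
  have hsign : ∀ i : Fin (n+1), 0 < (-1:ℝ)^(i:ℕ) * pfun d w (-(d i)) := by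
    intro i
    rw [pfun_eval, mul_left_comm]
    exact mul_pos (hw i) (sign_prod_sub d hd i)
  have hfar := far_sign d w hd hw
  set lo : Fin (n+1) → ℝ := fun i =>
    if h : (i:ℕ) < n then -(d ⟨(i:ℕ)+1, by omega⟩) else -(d (Fin.last n) + B) with hlodef
  have hlo : ∀ i, lo i < -(d i) := by
    intro i
    simp only [hlodef]
    split
    · apply neg_lt_neg
      apply hd
      exact Fin.lt_def.mpr (by simp)
    · next h =>
      have hin : (i:ℕ) = n := by have := i.isLt; omega
      have hieq : i = Fin.last n := Fin.ext hin
      rw [hieq]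
      have : (0:ℝ) < B := by rw [hBdef]; linarith
      linarith
  have hprod : ∀ i, pfun d w (lo i) * pfun d w (-(d i)) < 0 := by
    intro i
    simp only [hlodef]
    split
    · next h =>
      have h1 := hsign ⟨(i:ℕ)+1, by omega⟩
      have h2 := hsign i
      simp only at h1
      have := mul_pos h1 h2
      rw [mul_mul_mul_comm, ← pow_add] at this
      have hodd : ((-1:ℝ) ^ ((i:ℕ) + 1 + (i:ℕ))) = -1 := Odd.neg_one_pow ⟨(i:ℕ), by ring⟩
      rw [hodd, neg_one_mul] at this
      linarith
    · next h =>
      have hin : (i:ℕ) = n := by have := i.isLt; omega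
      have hieq : i = Fin.last n := Fin.ext hin
      have h2 := hsign i
      rw [hieq] at h2 ⊢
      have h1 := hfar
      have := mul_pos h1 h2
      rw [mul_mul_mul_comm, ← pow_add] at this
      have hodd : ((-1:ℝ) ^ (n + 1 + ((Fin.last n : Fin (n+1)):ℕ))) = -1 := by
        rw [Fin.val_last]; exact Odd.neg_one_pow ⟨n, by ring⟩
      rw [hodd, neg_one_mul] at this
      linarith
  have hroot : ∀ i : Fin (n+1), ∃ c, c ∈ Set.Ioo (lo i) (-(d i)) ∧ pfun d w c = 0 := by
    intro i
    obtain ⟨c, hc, h0⟩ := exists_root_Ioo (pfun_cont d w) (hlo i) (hprod i)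
    exact ⟨c, hc, h0⟩
  choose lam hmem hzero using hroot
  have hup : ∀ i, lam i < -(d i) := fun i => (hmem i).2
  have hlow : ∀ i : Fin (n+1), ∀ h : (i:ℕ) < n, -d ⟨(i:ℕ)+1, by omega⟩ < lam i := by
    intro i h
    have := (hmem i).1
    simp only [hlodef] at this
    rw [dif_pos h] at this
    exact this
  refine ⟨lam, hzero, ?_, hup, hlow, ?_⟩
  · intro i k
    rcases le_or_gt k i with hki | hik
    · have : d k ≤ d i := hd.monotone hki
      have := hup i
      intro hcon
      nlinarith
    · have hin : (i:ℕ) < n := by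
        have h1 : (i:ℕ) < (k:ℕ) := hik
        have := k.isLt; omega
      have hlb := hlow i hin
      have : d ⟨(i:ℕ)+1, by omega⟩ ≤ d k := by
        apply hd.monotone
        exact Fin.le_def.mpr (by simp; omega)
      intro hcon
      nlinarith
  · intro i j hij
    have hin : (i:ℕ) < n := by
      have h1 : (i:ℕ) < (j:ℕ) := hij
      have := j.isLt; omega
    have h1 : lam j < -(d j) := hup j
    have h2 : d ⟨(i:ℕ)+1, by omega⟩ ≤ d j := by
      apply hd.monotone
      exact Fin.le_def.mpr (by simp; exact hij)
    have h3 := hlow i hin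
    linarith

lemma eval_charpoly' {m : ℕ} (M : Matrix (Fin m) (Fin m) ℝ) (x : ℝ) :
    M.charpoly.eval x = (x • (1 : Matrix (Fin m) (Fin m) ℝ) - M).det := by
  rw [Matrix.charpoly, ← coe_evalRingHom, RingHom.map_det]
  congr 1
  ext i j
  by_cases h : i = j <;>
    simp [Matrix.charmatrix_apply, Matrix.one_apply, h, Matrix.diagonal_apply]

lemma det_first_row {m : ℕ} (M : Matrix (Fin (m+1)) (Fin (m+1)) ℝ) (x : ℝ)
    (h0 : ∀ j, M 0 j = if j = 0 then x else 0) :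
    M.det = x * (M.submatrix Fin.succ Fin.succ).det := by
  rw [Matrix.det_succ_row_zero]
  rw [Finset.sum_eq_single 0]
  · rw [h0 0, if_pos rfl, Fin.succAbove_zero]
    simp
  · intro j _ hj
    rw [h0 j, if_neg hj]
    ring
  · intro h; exact absurd (Finset.mem_univ 0) h

set_option maxHeartbeats 2000000 in
theorem stmt_3 (L : ℕ) (hL : 1 ≤ L) (Ju η A α : ℝ) (hJ : 0 < Ju) (hη : 0 < η) (hA : 0 < A)
    (hα0 : 0 < α) (hα1 : α < 1)
    (θ μ γ Υ : Fin L → ℝ) (hθ : ∀ ℓ, 0 < θ ℓ) (hmono : StrictMono θ) (hμ : ∀ ℓ, 0 < μ ℓ)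
    (hγ : ∀ ℓ, γ ℓ = (2 * Real.sin (Real.pi * α) / (Real.pi * Ju)) * θ ℓ ^ (1 - 2 * α))
    (hΥ : ∀ ℓ, Υ ℓ = A * Real.Gamma (1 + α) * γ ℓ)
    (S : Matrix (Fin (L + 2)) (Fin (L + 2)) ℝ)
    (hS : ∀ i j : Fin (L + 2), S i j =
      if (i : ℕ) = 0 ∨ (j : ℕ) = 0 then 0
      else if (i : ℕ) = 1 ∧ (j : ℕ) = 1 then -1 / (Ju * η)
      else if h : (i : ℕ) = 1 ∧ 2 ≤ (j : ℕ) then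
        -A * Real.Gamma (1 + α) * μ ⟨(j : ℕ) - 2, by have := j.isLt; omega⟩ / Ju
      else if h : 2 ≤ (i : ℕ) ∧ (j : ℕ) = 1 then
        -γ ⟨(i : ℕ) - 2, by have := i.isLt; omega⟩ / η
      else if h : 2 ≤ (i : ℕ) ∧ 2 ≤ (j : ℕ) then
        -Υ ⟨(i : ℕ) - 2, by have := i.isLt; omega⟩ * μ ⟨(j : ℕ) - 2, by have := j.isLt; omega⟩
          - (θ ⟨(i : ℕ) - 2, by have := i.isLt; omega⟩) ^ 2 * (if i = j then 1 else 0)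
      else 0) :
    S.charpoly.rootMultiplicity 0 = 1 ∧
    (∃ lam : Fin (L + 1) → ℝ,
      (∀ i, S.charpoly.IsRoot (lam i)) ∧
      lam ⟨L, by omega⟩ < -(θ ⟨L - 1, by omega⟩) ^ 2 ∧
      (∀ m : Fin L, 1 ≤ (m : ℕ) →
        -(θ m) ^ 2 < lam ⟨(m : ℕ), by have := m.isLt; omega⟩ ∧
        lam ⟨(m : ℕ), by have := m.isLt; omega⟩
          < -(θ ⟨(m : ℕ) - 1, by have := m.isLt; omega⟩) ^ 2) ∧
      -(θ ⟨0, by omega⟩) ^ 2 < lam ⟨0, by omega⟩ ∧ lam ⟨0, by omega⟩ < 0) ∧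
    S.charpoly.roots.card = L + 2 ∧ S.charpoly.roots.Nodup ∧
    (∀ x ∈ S.charpoly.roots, x ≠ 0 → x < 0) := by
  -- basic positivity facts
  have hπ : 0 < Real.pi := Real.pi_pos
  have hsin : 0 < Real.sin (Real.pi * α) := by
    apply Real.sin_pos_of_pos_of_lt_pi
    · positivity
    · nlinarith
  have hγpos : ∀ ℓ, 0 < γ ℓ := by
    intro ℓ
    rw [hγ ℓ]
    have : 0 < θ ℓ ^ (1 - 2 * α) := Real.rpow_pos_of_pos (hθ ℓ) _
    positivity
  have hG : 0 < Real.Gamma (1 + α) := Real.Gamma_pos_of_pos (by linarith)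
  -- set up the reduced data
  set d : Fin (L+1) → ℝ := fun i =>
    if h : (i:ℕ) = 0 then 0 else θ ⟨(i:ℕ) - 1, by have := i.isLt; omega⟩ ^ 2 with hd_def
  set u : Fin (L+1) → ℝ := fun i =>
    if h : (i:ℕ) = 0 then 1/Ju else γ ⟨(i:ℕ) - 1, by have := i.isLt; omega⟩ with hu_def
  set v : Fin (L+1) → ℝ := fun j =>
    if h : (j:ℕ) = 0 then 1/η
    else A * Real.Gamma (1 + α) * μ ⟨(j:ℕ) - 1, by have := j.isLt; omega⟩ with hv_def
  set w : Fin (L+1) → ℝ := fun i => u i * v i with hw_def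
  have hd0 : ∀ i, 0 ≤ d i := by
    intro i
    simp only [hd_def]
    split
    · exact le_refl 0
    · positivity
  have hdmono : StrictMono d := by
    intro a b hab
    have hab' : (a:ℕ) < (b:ℕ) := hab
    simp only [hd_def]
    rcases Nat.eq_zero_or_pos (a:ℕ) with ha | ha
    · rw [dif_pos ha, dif_neg (by omega)]
      exact pow_pos (hθ _) 2
    · rw [dif_neg (by omega), dif_neg (by omega)]
      have : θ ⟨(a:ℕ) - 1, by have := a.isLt; omega⟩ < θ ⟨(b:ℕ) - 1, by have := b.isLt; omega⟩ := by
        apply hmono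
        exact Fin.lt_def.mpr (by simp; omega)
      have hpos := hθ ⟨(a:ℕ) - 1, by have := a.isLt; omega⟩
      nlinarith
  have hwpos : ∀ i, 0 < w i := by
    intro i
    simp only [hw_def, hu_def, hv_def]
    by_cases hi0 : (i:ℕ) = 0
    · rw [dif_pos hi0, dif_pos hi0]; positivity
    · rw [dif_neg hi0, dif_neg hi0]
      refine mul_pos (hγpos _) ?_
      have := hμ ⟨(i:ℕ) - 1, by have := i.isLt; omega⟩
      positivity
  -- block identity
  have hblock : ∀ x : ℝ, S.charpoly.eval x
      = x * (Matrix.of fun i j : Fin (L+1) =>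
          (if i = j then (x + d i) else 0) + u i * v j).det := by
    intro x
    rw [eval_charpoly']
    rw [det_first_row (x • 1 - S) x ?_]
    · congr 1
      congr 1
      ext i j
      simp only [Matrix.submatrix_apply, Matrix.sub_apply, Matrix.smul_apply, Matrix.one_apply,
        smul_eq_mul, Matrix.of_apply]
      rw [hS]
      simp only [Fin.val_succ, Fin.ext_iff]
      simp only [show ∀ m : ℕ, m + 1 - 2 = m - 1 from fun m => by omega]
      simp only [hd_def, hu_def, hv_def, hΥ]
      rw [if_neg (c := (i:ℕ) + 1 = 0 ∨ (j:ℕ) + 1 = 0) (by omega)]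
      by_cases hi0 : (i:ℕ) = 0 <;> by_cases hj0 : (j:ℕ) = 0
      · rw [if_pos (c := (i:ℕ) + 1 = 1 ∧ (j:ℕ) + 1 = 1) (by omega),
          if_pos (c := (i:ℕ) + 1 = (j:ℕ) + 1) (by omega),
          if_pos (c := (i:ℕ) = (j:ℕ)) (by omega),
          dif_pos hi0, dif_pos hi0, dif_pos hj0]
        ring
      · rw [if_neg (c := (i:ℕ) + 1 = 1 ∧ (j:ℕ) + 1 = 1) (by omega),
          dif_pos (c := (i:ℕ) + 1 = 1 ∧ 2 ≤ (j:ℕ) + 1) (by omega),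
          if_neg (c := (i:ℕ) + 1 = (j:ℕ) + 1) (by omega),
          if_neg (c := (i:ℕ) = (j:ℕ)) (by omega),
          dif_pos hi0, dif_neg hj0]
        ring
      · rw [if_neg (c := (i:ℕ) + 1 = 1 ∧ (j:ℕ) + 1 = 1) (by omega),
          dif_neg (c := (i:ℕ) + 1 = 1 ∧ 2 ≤ (j:ℕ) + 1) (by omega),
          dif_pos (c := 2 ≤ (i:ℕ) + 1 ∧ (j:ℕ) + 1 = 1) (by omega),
          if_neg (c := (i:ℕ) + 1 = (j:ℕ) + 1) (by omega),
          if_neg (c := (i:ℕ) = (j:ℕ)) (by omega),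
          dif_neg hi0, dif_pos hj0]
        ring
      · rw [if_neg (c := (i:ℕ) + 1 = 1 ∧ (j:ℕ) + 1 = 1) (by omega),
          dif_neg (c := (i:ℕ) + 1 = 1 ∧ 2 ≤ (j:ℕ) + 1) (by omega),
          dif_neg (c := 2 ≤ (i:ℕ) + 1 ∧ (j:ℕ) + 1 = 1) (by omega),
          dif_pos (c := 2 ≤ (i:ℕ) + 1 ∧ 2 ≤ (j:ℕ) + 1) (by omega),
          dif_neg hi0, dif_neg hi0, dif_neg hj0]
        by_cases hij : (i:ℕ) = (j:ℕ)
        · rw [if_pos (c := (i:ℕ) + 1 = (j:ℕ) + 1) (by omega),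
            if_pos (c := (i:ℕ) = (j:ℕ)) hij]
          have : θ ⟨(i:ℕ) - 1, by have := i.isLt; omega⟩
              = θ ⟨(j:ℕ) - 1, by have := j.isLt; omega⟩ := by
            congr 1
            exact Fin.ext (by simp [hij])
          rw [this]
          ring
        · rw [if_neg (c := (i:ℕ) + 1 = (j:ℕ) + 1) (by omega),
            if_neg (c := (i:ℕ) = (j:ℕ)) hij]
          ring
    · intro j
      simp only [Matrix.sub_apply, Matrix.smul_apply, Matrix.one_apply, smul_eq_mul]
      rw [hS]
      simp only [Fin.ext_iff, Fin.val_zero, eq_self_iff_true, true_or, if_true]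
      split_ifs <;> first | ring1 | (exfalso; omega)
  -- evaluation identity away from the poles
  have heval : ∀ x : ℝ, (∀ k, x + d k ≠ 0) → S.charpoly.eval x = x * pfun d w x := by
    intro x hx
    rw [hblock x, aux_det (fun k => x + d k) u v hx]
    rfl
  obtain ⟨lam, hzero, hne0, hup, hlow, hanti⟩ := core d w hdmono hwpos
  have hrootlam : ∀ i, S.charpoly.IsRoot (lam i) := by
    intro i
    have h := heval (lam i) (hne0 i)
    rw [Polynomial.IsRoot, h, hzero i, mul_zero]
  have hroot0 : S.charpoly.IsRoot 0 := by
    rw [Polynomial.IsRoot, hblock 0, zero_mul]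
  have hlamneg : ∀ i, lam i < 0 := fun i =>
    lt_of_lt_of_le (hup i) (by have := hd0 i; linarith)
  have hinj : Function.Injective lam := by
    intro a b hab
    by_contra hne
    rcases lt_or_gt_of_ne hne with h | h
    · exact absurd hab (ne_of_gt (hanti a b h))
    · exact absurd hab (ne_of_lt (hanti b a h))
  have hchar_ne : S.charpoly ≠ 0 := (Matrix.charpoly_monic S).ne_zero
  have hdeg : S.charpoly.natDegree = L + 2 := by
    rw [Matrix.charpoly_natDegree_eq_dim, Fintype.card_fin]
  set sm : Multiset ℝ := 0 ::ₘ Finset.univ.val.map lam with hs_def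
  have hnotmem : (0:ℝ) ∉ Finset.univ.val.map lam := by
    intro h
    obtain ⟨i, _, hi⟩ := Multiset.mem_map.mp h
    exact absurd hi (ne_of_lt (hlamneg i))
  have hnodups : sm.Nodup := by
    rw [hs_def]
    exact Multiset.nodup_cons.mpr ⟨hnotmem, Multiset.Nodup.map hinj Finset.univ.nodup⟩
  have hcards : sm.card = L + 2 := by
    rw [hs_def, Multiset.card_cons, Multiset.card_map]
    simp
  have hmem_root : ∀ a ∈ sm, S.charpoly.IsRoot a := by
    intro a ha
    rw [hs_def, Multiset.mem_cons] at ha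
    rcases ha with h0 | hmap
    · rw [h0]; exact hroot0
    · obtain ⟨i, _, hi⟩ := Multiset.mem_map.mp hmap
      rw [← hi]; exact hrootlam i
  have hle : sm ≤ S.charpoly.roots := by
    rw [Multiset.le_iff_count]
    intro a
    by_cases ha : a ∈ sm
    · rw [Multiset.count_eq_one_of_mem hnodups ha, Polynomial.count_roots]
      exact (Polynomial.rootMultiplicity_pos hchar_ne).mpr (hmem_root a ha)
    · rw [Multiset.count_eq_zero_of_notMem ha]
      exact Nat.zero_le _
  have hcard_le : S.charpoly.roots.card ≤ L + 2 := by
    have h := S.charpoly.card_roots'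
    rwa [hdeg] at h
  have hs_eq : sm = S.charpoly.roots :=
    Multiset.eq_of_le_of_card_le hle (by rw [hcards]; exact hcard_le)
  -- helper evaluations of d
  have hdval : ∀ (k : ℕ) (hk : k < L + 1) (hk0 : k ≠ 0) (hk1 : k - 1 < L),
      d ⟨k, hk⟩ = θ ⟨k - 1, hk1⟩ ^ 2 := by
    intro k hk hk0 hk1
    simp only [hd_def]
    rw [dif_neg hk0]
  have hdval2 : ∀ (k : ℕ) (hk1 : k < L) (hk : k + 1 < L + 1),
      d ⟨k + 1, hk⟩ = θ ⟨k, hk1⟩ ^ 2 := by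
    intro k hk1 hk
    simp only [hd_def]
    rw [dif_neg (Nat.succ_ne_zero k)]
    simp only [Nat.add_sub_cancel]
  have hdval0 : ∀ (hk : 0 < L + 1), d ⟨0, hk⟩ = 0 := by
    intro hk
    simp only [hd_def]
    simp
  refine ⟨?_, ?_, ?_, ?_, ?_⟩
  · rw [← Polynomial.count_roots, ← hs_eq, hs_def, Multiset.count_cons_self,
      Multiset.count_eq_zero_of_notMem hnotmem]
  · refine ⟨lam, hrootlam, ?_, ?_, ?_, ?_⟩
    · have h1 := hup ⟨L, by omega⟩
      rwa [hdval L (by omega) (by omega) (by omega)] at h1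
    · intro m hm
      constructor
      · have h1 := hlow ⟨(m:ℕ), by omega⟩ (by exact m.isLt)
        rwa [hdval2 (m:ℕ) m.isLt (by omega), Fin.eta] at h1
      · have h1 := hup ⟨(m:ℕ), by omega⟩
        rwa [hdval (m:ℕ) (by omega) (by omega) (by omega)] at h1
    · have h1 := hlow ⟨0, by omega⟩ (by exact hL)
      rwa [hdval2 0 (by omega) (by omega)] at h1
    · have h1 := hup ⟨0, by omega⟩
      rw [hdval0 (by omega)] at h1
      simpa using h1
  · rw [← hs_eq]; exact hcards
  · rw [← hs_eq]; exact hnodups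
  · intro x hx hxne
    rw [← hs_eq, hs_def, Multiset.mem_cons] at hx
    rcases hx with h0 | hmap
    · exact absurd h0 hxne
    · obtain ⟨i, _, hi⟩ := Multiset.mem_map.mp hmap
      rw [← hi]
      exact hlamneg i
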